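/- A monomial ideal J in k[x_1,...,x_n] is of Borel type if and only if for every i, the saturation J : (x_1,...,x_i)^∞ equals J : x_i^∞. -/

import Mathlib

open MvPolynomial Finsupp Module

namespace Paper

variable {k : Type*} [Field k] {n : ℕ}

/-- `J` is a monomial ideal: generated by a set of monomials. -/
def IsMonomialIdeal (J : Ideal (MvPolynomial (Fin n) k)) : Prop :=
  ∃ G : Set (Fin n →₀ ℕ),
    J = Ideal.span ((fun d => (monomial d (1:k) : MvPolynomial (Fin n) k)) '' G)

/-- The Borel-type condition: for `i < j` and a monomial `x^d ∈ J` with `x_j ∣ x^d`,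
some `x_i^s · x^d / x_j` lies in `J`. -/
def BorelCond (J : Ideal (MvPolynomial (Fin n) k)) : Prop :=
  ∀ i j : Fin n, i < j → ∀ d : Fin n →₀ ℕ,
    (monomial d (1:k) : MvPolynomial (Fin n) k) ∈ J → d j ≠ 0 →
    ∃ s : ℕ,
      (monomial (d + Finsupp.single i s - Finsupp.single j 1) (1:k) :
        MvPolynomial (Fin n) k) ∈ J

/-- `J` is a monomial ideal of Borel type. -/
def IsBorelType (J : Ideal (MvPolynomial (Fin n) k)) : Prop :=
  IsMonomialIdeal J ∧ BorelCond J

/-- The saturation `J : I^∞`. -/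
noncomputable def sat (J I : Ideal (MvPolynomial (Fin n) k)) : Ideal (MvPolynomial (Fin n) k) :=
  ⨆ m : ℕ, Submodule.colon J ((I ^ m) : Ideal (MvPolynomial (Fin n) k))

/-- The product of the variables with (0-based) index `≥ r`, i.e. `x_{r+1} ⋯ x_n`. -/
noncomputable def tailProd (k : Type*) [Field k] (n r : ℕ) : MvPolynomial (Fin n) k :=
  ∏ i ∈ Finset.univ.filter (fun i : Fin n => r ≤ (i : ℕ)), X i

/-- `Φ_r(J) = J : (x_{r+1} ⋯ x_n)^∞`. -/
noncomputable def Phi (r : ℕ) (J : Ideal (MvPolynomial (Fin n) k)) :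
    Ideal (MvPolynomial (Fin n) k) :=
  sat J (Ideal.span {tailProd k n r})

/-- The projection `Π_r : k[x_1,…,x_n] → k[x_1,…,x_r]` sending `x_{r+1},…,x_n` to `0`. -/
noncomputable def projDown (k : Type*) [Field k] (n r : ℕ) :
    MvPolynomial (Fin n) k →ₐ[k] MvPolynomial (Fin r) k :=
  aeval (fun i : Fin n => if h : (i : ℕ) < r then X ⟨i, h⟩ else 0)

/-- `Π_r(J)`, the image ideal of `J` in `k[x_1,…,x_r]`. -/
noncomputable def PiIdeal (r : ℕ) (J : Ideal (MvPolynomial (Fin n) k)) :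
    Ideal (MvPolynomial (Fin r) k) :=
  J.map (projDown k n r).toRingHom

/-- The exponent `d` is a minimal generator of the monomial ideal `J`. -/
def IsMinGen (J : Ideal (MvPolynomial (Fin n) k)) (d : Fin n →₀ ℕ) : Prop :=
  (monomial d (1:k) : MvPolynomial (Fin n) k) ∈ J ∧
    ∀ d' : Fin n →₀ ℕ, d' ≤ d →
      (monomial d' (1:k) : MvPolynomial (Fin n) k) ∈ J → d' = d

/-- The leading exponent of a polynomial with respect to a monomial order. -/
noncomputable def leadExp (m : MonomialOrder (Fin n)) (f : MvPolynomial (Fin n) k) :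
    Fin n →₀ ℕ :=
  m.toSyn.symm (f.support.sup fun d => m.toSyn d)

/-- The initial ideal of `P` with respect to the monomial order `m`. -/
noncomputable def initialIdeal (m : MonomialOrder (Fin n)) (P : Ideal (MvPolynomial (Fin n) k)) :
    Ideal (MvPolynomial (Fin n) k) :=
  Ideal.span {g | ∃ f ∈ P, f ≠ 0 ∧ g = (monomial (leadExp m f) (1:k) : MvPolynomial (Fin n) k)}

/-- A homogeneous ideal: closed under taking homogeneous components. -/
def IsHomogIdeal (P : Ideal (MvPolynomial (Fin n) k)) : Prop :=
  ∀ f ∈ P, ∀ i : ℕ, homogeneousComponent i f ∈ P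

/-- The ideal generated by the variables `x_1, …, x_{i+1}` (0-based indices `≤ i`). -/
noncomputable def varIdealLe (k : Type*) [Field k] {n : ℕ} (i : Fin n) :
    Ideal (MvPolynomial (Fin n) k) :=
  Ideal.span ((fun j : Fin n => (X j : MvPolynomial (Fin n) k)) '' {j | j ≤ i})

/-- The Hilbert series of `S/I` as a power series with integer coefficients. -/
noncomputable def hilb {N : ℕ} (I : Ideal (MvPolynomial (Fin N) k)) : PowerSeries ℤ :=
  PowerSeries.mk fun i =>
    (Module.finrank k (Submodule.map (Ideal.Quotient.mkₐ k I).toLinearMap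
      (homogeneousSubmodule (Fin N) k i)) : ℤ)

/-- The `i`-th Hilbert coefficient read off from the numerator polynomial `q`:
the coefficient of `(t-1)^i` in `q`. -/
noncomputable def hc (q : Polynomial ℤ) (i : ℕ) : ℤ :=
  (Polynomial.taylor 1 q).coeff i

/-- The Krull dimension of the quotient ring `S/I`. -/
noncomputable def qdim {N : ℕ} (I : Ideal (MvPolynomial (Fin N) k)) : WithBot (WithTop ℕ) :=
  ringKrullDim (MvPolynomial (Fin N) k ⧸ I)

/-- The embedding `k[x_1,…,x_r] → k[x_1,…,x_n]`. -/
noncomputable def inclUp (k : Type*) [Field k] {r n : ℕ} (h : r ≤ n) :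
    MvPolynomial (Fin r) k →ₐ[k] MvPolynomial (Fin n) k :=
  rename (Fin.castLE h)

/-- The embedding of variables for the tail subring `k[x_{r+1},…,x_n]`. -/
def tailEmb (n r : ℕ) (h : r ≤ n) : Fin (n - r) → Fin n :=
  fun j => ⟨r + j.1, by omega⟩

/-- The inclusion `k[x_{r+1},…,x_n] → k[x_1,…,x_n]` as a ring hom. -/
noncomputable def tailIncl (k : Type*) [Field k] {n : ℕ} (r : ℕ) (h : r ≤ n) :
    MvPolynomial (Fin (n - r)) k →+* MvPolynomial (Fin n) k :=
  (rename (tailEmb n r h)).toRingHom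

/-- `J₁ = (J ∩ k[x_1,…,x_r])S`: the ideal generated by the monomials of `J`
lying in `k[x_1,…,x_r]`. -/
noncomputable def Jone (r : ℕ) (J : Ideal (MvPolynomial (Fin n) k)) :
    Ideal (MvPolynomial (Fin n) k) :=
  Ideal.span {g | ∃ d : Fin n →₀ ℕ, (∀ i : Fin n, r ≤ (i : ℕ) → d i = 0) ∧
    (monomial d (1:k) : MvPolynomial (Fin n) k) ∈ J ∧
    g = (monomial d (1:k) : MvPolynomial (Fin n) k)}

/-- The quotient module `J₂/J₁` for ideals `J₁ ≤ J₂`. -/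
abbrev quotMod (J₁ J₂ : Ideal (MvPolynomial (Fin n) k)) :=
  (J₂ : Submodule (MvPolynomial (Fin n) k) (MvPolynomial (Fin n) k)) ⧸
    (Submodule.comap
      (J₂ : Submodule (MvPolynomial (Fin n) k) (MvPolynomial (Fin n) k)).subtype
      (J₁ : Submodule (MvPolynomial (Fin n) k) (MvPolynomial (Fin n) k)))

/-- `J₂/J₁` as a module over `k[x_{r+1},…,x_n]`. -/
noncomputable def quotModTail (r : ℕ) (h : r ≤ n) (J₁ J₂ : Ideal (MvPolynomial (Fin n) k)) :
    Module (MvPolynomial (Fin (n - r)) k) (quotMod J₁ J₂) :=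
  Module.compHom _ (tailIncl k r h)

/-- The degrevlex property of a monomial order: compare total degrees first, and break
ties by the *last* variable in which the exponents differ, where *larger* exponent
means *smaller* monomial. -/
def IsDegRevLex (m : MonomialOrder (Fin n)) : Prop :=
  ∀ a b : Fin n →₀ ℕ, (m.toSyn a < m.toSyn b) ↔
    ((a.sum fun _ e => e) < (b.sum fun _ e => e) ∨
      ((a.sum fun _ e => e) = (b.sum fun _ e => e) ∧
        ∃ i : Fin n, b i < a i ∧ ∀ j : Fin n, i < j → a j = b j))

end Paper

open Paper MvPolynomial

section AuxLemmas

variable {k : Type*} [Field k] {n : ℕ}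

lemma Paper.mem_sat {J I : Ideal (MvPolynomial (Fin n) k)} {f : MvPolynomial (Fin n) k} :
    f ∈ sat J I ↔ ∃ m : ℕ, f ∈ Submodule.colon J ((I ^ m : Ideal (MvPolynomial (Fin n) k)) :
      Submodule (MvPolynomial (Fin n) k) (MvPolynomial (Fin n) k)) := by
  have hmono : Monotone (fun m : ℕ => Submodule.colon J
      ((I ^ m : Ideal (MvPolynomial (Fin n) k)) :
        Submodule (MvPolynomial (Fin n) k) (MvPolynomial (Fin n) k))) := by
    intro a b hab x hx
    rw [Submodule.mem_colon] at hx ⊢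
    exact fun p hp => hx p (Ideal.pow_le_pow_right hab hp)
  exact Submodule.mem_iSup_of_directed _ hmono.directed_le

/-- upward closure of monomial ideals -/
lemma Paper.monomial_mem_mono {J : Ideal (MvPolynomial (Fin n) k)} (hJ : IsMonomialIdeal J)
    {d e : Fin n →₀ ℕ} (hde : d ≤ e)
    (hd : (monomial d (1:k) : MvPolynomial (Fin n) k) ∈ J) :
    (monomial e (1:k) : MvPolynomial (Fin n) k) ∈ J := by
  obtain ⟨G, rfl⟩ := hJ
  rw [mem_ideal_span_monomial_image] at hd ⊢
  intro t ht
  have ht' : t = e := Finset.mem_singleton.mp (support_monomial_subset ht)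
  subst ht'
  obtain ⟨g, hgG, hgd⟩ := hd d (by
    rw [MvPolynomial.mem_support_iff, coeff_monomial, if_pos rfl]
    exact one_ne_zero)
  exact ⟨g, hgG, hgd.trans hde⟩

lemma Paper.monomial_shift_mem {J : Ideal (MvPolynomial (Fin n) k)} (hJ : IsMonomialIdeal J)
    {f : MvPolynomial (Fin n) k} {i : Fin n} {m : ℕ}
    (h : f * X i ^ m ∈ J) :
    ∀ e ∈ f.support, (monomial (e + Finsupp.single i m) (1:k) : MvPolynomial (Fin n) k) ∈ J := by
  intro e he
  obtain ⟨G, hG⟩ := hJ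
  rw [hG, mem_ideal_span_monomial_image] at h
  have hc : coeff (e + Finsupp.single i m) (f * X i ^ m) = coeff e f := by
    rw [X_pow_eq_monomial, coeff_mul_monomial, mul_one]
  have hsupp : e + Finsupp.single i m ∈ (f * X i ^ m).support := by
    rw [MvPolynomial.mem_support_iff, hc]
    exact MvPolynomial.mem_support_iff.mp he
  obtain ⟨g, hgG, hge⟩ := h _ hsupp
  rw [hG, mem_ideal_span_monomial_image]
  intro t ht
  have ht' : t = e + Finsupp.single i m := Finset.mem_singleton.mp (support_monomial_subset ht)
  subst ht'
  exact ⟨g, hgG, hge⟩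

lemma Paper.borel_iter {J : Ideal (MvPolynomial (Fin n) k)} (hB : BorelCond J)
    {a b : Fin n} (hab : a < b) :
    ∀ m : ℕ, ∀ e : Fin n →₀ ℕ,
      (monomial (e + Finsupp.single b m) (1:k) : MvPolynomial (Fin n) k) ∈ J →
      ∃ s : ℕ, (monomial (e + Finsupp.single a s) (1:k) : MvPolynomial (Fin n) k) ∈ J := by
  intro m
  induction m with
  | zero => exact fun e h => ⟨0, by simpa using h⟩
  | succ m ih =>
    intro e h
    have hne : (e + Finsupp.single b (m+1)) b ≠ 0 := by
      simp [Finsupp.add_apply]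
    obtain ⟨s₁, hs₁⟩ := hB a b hab (e + Finsupp.single b (m+1)) h hne
    have hab' : a ≠ b := ne_of_lt hab
    have key : (e + Finsupp.single b (m+1)) + Finsupp.single a s₁ - Finsupp.single b 1
        = (e + Finsupp.single a s₁) + Finsupp.single b m := by
      ext t
      simp only [Finsupp.tsub_apply, Finsupp.add_apply]
      rcases eq_or_ne t b with rfl | htb
      · simp only [Finsupp.single_eq_same, Finsupp.single_eq_of_ne hab']
        omega
      · simp only [Finsupp.single_eq_of_ne htb]
        omega
    rw [key] at hs₁
    obtain ⟨s₂, hs₂⟩ := ih (e + Finsupp.single a s₁) hs₁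
    refine ⟨s₁ + s₂, ?_⟩
    rwa [add_assoc, ← Finsupp.single_add] at hs₂

/-- powers of `varIdealLe` are contained in the span of big monomials -/
lemma Paper.varIdealLe_pow_le (i : Fin n) (M : ℕ) :
    (varIdealLe k i) ^ M ≤ Ideal.span ((fun d => (monomial d (1:k) : MvPolynomial (Fin n) k)) ''
      {c : Fin n →₀ ℕ | (∀ t, c t ≠ 0 → t ≤ i) ∧ M ≤ c.sum fun _ e => e}) := by
  induction M with
  | zero =>
    rw [pow_zero, Ideal.one_eq_top, top_le_iff, Ideal.eq_top_iff_one]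
    apply Ideal.subset_span
    exact ⟨0, ⟨by simp, by simp⟩, by simp⟩
  | succ M ih =>
    rw [pow_succ]
    have hvar : (varIdealLe k i : Ideal (MvPolynomial (Fin n) k)) ≤
        Ideal.span ((fun d => (monomial d (1:k) : MvPolynomial (Fin n) k)) ''
          {c : Fin n →₀ ℕ | ∃ j : Fin n, j ≤ i ∧ c = Finsupp.single j 1}) := by
      rw [varIdealLe]
      apply Ideal.span_le.mpr
      rintro x ⟨j, hj, rfl⟩
      apply Ideal.subset_span
      exact ⟨Finsupp.single j 1, ⟨j, hj, rfl⟩, rfl⟩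
    calc (varIdealLe k i) ^ M * varIdealLe k i
        ≤ Ideal.span _ * Ideal.span _ := Ideal.mul_mono ih hvar
      _ ≤ _ := by
          rw [Ideal.span_mul_span']
          apply Ideal.span_mono
          rintro x ⟨y, ⟨a, ⟨haS, haM⟩, rfl⟩, z, ⟨b, ⟨j, hj, rfl⟩, rfl⟩, rfl⟩
          refine ⟨a + Finsupp.single j 1, ⟨?_, ?_⟩, ?_⟩
          · intro t ht
            rw [Finsupp.add_apply] at ht
            rcases Nat.eq_zero_or_pos (a t) with h0 | hpos
            · rw [h0, zero_add] at ht
              have : t = j := by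
                by_contra hne
                simp [Finsupp.single_apply, Ne.symm hne] at ht
              exact this ▸ hj
            · exact haS t hpos.ne'
          · rw [Finsupp.sum_add_index' (by simp) (by intro a b c; rfl)]
            have : (Finsupp.single j 1).sum (fun _ e => e) = 1 := by
              simp [Finsupp.sum_single_index]
            omega
          · simp [monomial_mul]

end AuxLemmas


set_option maxHeartbeats 1600000 in
/-- A monomial ideal `J` is of Borel type iff for every `i`
the saturation `J : (x_1,…,x_i)^∞` equals `J : x_i^∞`. -/
theorem stmt1 {k : Type*} [Field k] {n : ℕ}
    (J : Ideal (MvPolynomial (Fin n) k)) (hJ : IsMonomialIdeal J) :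
    BorelCond J ↔
      ∀ i : Fin n, sat J (varIdealLe k i) = sat J (Ideal.span {X i}) := by
  constructor
  · intro hB i
    apply le_antisymm
    · -- easy inclusion: span {X i} ≤ varIdealLe i
      have hle : Ideal.span {(X i : MvPolynomial (Fin n) k)} ≤ varIdealLe k i := by
        rw [Ideal.span_le]
        rintro x hx
        rw [Set.mem_singleton_iff] at hx
        subst hx
        rw [varIdealLe]
        exact Ideal.subset_span ⟨i, le_refl i, rfl⟩
      intro f hf
      rw [Paper.mem_sat] at hf ⊢
      obtain ⟨m, hm⟩ := hf
      refine ⟨m, ?_⟩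
      rw [Submodule.mem_colon] at hm ⊢
      intro p hp
      exact hm p (Ideal.pow_right_mono hle m hp)
    · -- hard inclusion
      intro f hf
      rw [Paper.mem_sat] at hf
      obtain ⟨m, hm⟩ := hf
      have hfX : f * X i ^ m ∈ J := by
        have hX : (X i : MvPolynomial (Fin n) k) ^ m ∈ (Ideal.span {(X i : MvPolynomial (Fin n) k)})^m := by
          rw [Ideal.span_singleton_pow]
          exact Ideal.subset_span rfl
        have h2 := Submodule.mem_colon.mp hm _ hX
        rwa [smul_eq_mul] at h2
      have hshift := Paper.monomial_shift_mem hJ hfX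
      have H' : ∀ (e : Fin n →₀ ℕ) (j : Fin n), ∃ S : ℕ,
          (e ∈ f.support → j ≤ i →
            (monomial (e + Finsupp.single j S) (1:k) : MvPolynomial (Fin n) k) ∈ J) := by
        intro e j
        by_cases he : e ∈ f.support
        · by_cases hji : j ≤ i
          · rcases lt_or_eq_of_le hji with hlt | heq
            · obtain ⟨s, hs⟩ := Paper.borel_iter hB hlt m e (hshift e he)
              exact ⟨s, fun _ _ => hs⟩
            · subst heq
              exact ⟨m, fun _ _ => hshift e he⟩
          · exact ⟨0, fun _ h => absurd h hji⟩
        · exact ⟨0, fun h => absurd h he⟩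
      choose sfun hsfun using H'
      set S : ℕ := f.support.sup (fun e => Finset.univ.sup fun j => sfun e j) with hS
      have hSmem : ∀ e ∈ f.support, ∀ j : Fin n, j ≤ i →
          (monomial (e + Finsupp.single j S) (1:k) : MvPolynomial (Fin n) k) ∈ J := by
        intro e he j hji
        have hle2 : sfun e j ≤ S := by
          refine le_trans (Finset.le_sup (f := fun j => sfun e j) (Finset.mem_univ j)) ?_
          exact Finset.le_sup (f := fun e => Finset.univ.sup fun j => sfun e j) he
        refine Paper.monomial_mem_mono hJ ?_ (hsfun e j he hji)
        intro t
        simp only [Finsupp.add_apply, Finsupp.single_apply]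
        split <;> omega
      set M : ℕ := n * S + 1 with hM
      rw [Paper.mem_sat]
      refine ⟨M, ?_⟩
      rw [Submodule.mem_colon]
      intro p hp
      have hp' := Paper.varIdealLe_pow_le (k := k) i M hp
      have hcol : Ideal.span ((fun d => (monomial d (1:k) : MvPolynomial (Fin n) k)) ''
          {c : Fin n →₀ ℕ | (∀ t, c t ≠ 0 → t ≤ i) ∧ M ≤ c.sum fun _ e => e}) ≤
          Submodule.colon J (Ideal.span {f}) := by
        rw [Ideal.span_le]
        rintro x ⟨c, ⟨hci, hcM⟩, rfl⟩
        rw [SetLike.mem_coe, Ideal.mem_colon_span_singleton]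
        obtain ⟨j, hji, hjS⟩ : ∃ j : Fin n, j ≤ i ∧ S ≤ c j := by
          rcases Nat.eq_zero_or_pos S with hS0 | hSpos
          · exact ⟨i, le_refl i, hS0 ▸ Nat.zero_le _⟩
          by_contra hcon
          push_neg at hcon
          have hall : ∀ j : Fin n, c j ≤ S - 1 := by
            intro j
            by_cases hj : j ≤ i
            · have := hcon j hj
              omega
            · have : c j = 0 := by
                by_contra h0
                exact hj (hci j h0)
              omega
          have hsum : (c.sum fun _ e => e) ≤ n * (S - 1) := by
            have h1 : (c.sum fun _ e => e) = ∑ t ∈ c.support, c t := rfl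
            have h2 : ∑ t ∈ c.support, c t ≤ ∑ t : Fin n, c t :=
              Finset.sum_le_sum_of_subset (Finset.subset_univ _)
            have h3 : ∑ t : Fin n, c t ≤ ∑ _t : Fin n, (S - 1) :=
              Finset.sum_le_sum fun t _ => hall t
            have h4 : ∑ _t : Fin n, (S - 1) = n * (S - 1) := by
              rw [Finset.sum_const, Finset.card_univ, Fintype.card_fin, smul_eq_mul]
            omega
          have hmul2 : n * (S - 1) ≤ n * S := Nat.mul_le_mul_left n (Nat.sub_le S 1)
          omega
        obtain ⟨G, hG⟩ := hJ
        rw [hG, mem_ideal_span_monomial_image]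
        intro t ht
        have ht2 := MvPolynomial.support_mul _ _ ht
        rw [Finset.mem_add] at ht2
        obtain ⟨u, hu, v, hv, rfl⟩ := ht2
        have hu' : u = c := Finset.mem_singleton.mp (support_monomial_subset hu)
        subst hu'
        have hmem := hSmem v hv j hji
        rw [hG, mem_ideal_span_monomial_image] at hmem
        obtain ⟨g, hgG, hg⟩ := hmem _ (by
          rw [MvPolynomial.mem_support_iff, coeff_monomial, if_pos rfl]
          exact one_ne_zero)
        refine ⟨g, hgG, hg.trans ?_⟩
        intro t'
        simp only [Finsupp.add_apply, Finsupp.single_apply]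
        split
        · next h =>
            subst h
            omega
        · omega
      have hfp : f • p ∈ J := by
        have h5 := hcol hp'
        rw [Ideal.mem_colon_span_singleton] at h5
        rwa [smul_eq_mul, mul_comm]
      exact hfp
  · intro hsat a b hab d hd hdb
    have hab' : a ≠ b := ne_of_lt hab
    have hXb : (X b : MvPolynomial (Fin n) k) = monomial (Finsupp.single b 1) 1 := rfl
    have hexp : d - Finsupp.single b 1 + Finsupp.single b 1 = d := by
      ext t
      simp only [Finsupp.add_apply, Finsupp.tsub_apply]
      rcases eq_or_ne t b with rfl | htb
      · simp only [Finsupp.single_eq_same]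
        omega
      · simp only [Finsupp.single_eq_of_ne htb]
        omega
    have hmul : (monomial (d - Finsupp.single b 1) (1:k) : MvPolynomial (Fin n) k) * X b
        = monomial d 1 := by
      rw [hXb, monomial_mul, mul_one, hexp]
    have hv1 : (monomial (d - Finsupp.single b 1) (1:k) : MvPolynomial (Fin n) k) ∈
        sat J (Ideal.span {X b}) := by
      rw [Paper.mem_sat]
      refine ⟨1, ?_⟩
      rw [pow_one, Ideal.mem_colon_span_singleton, hmul]
      exact hd
    rw [← hsat b, Paper.mem_sat] at hv1
    obtain ⟨m, hm⟩ := hv1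
    have hXa : (X a : MvPolynomial (Fin n) k) ∈ varIdealLe k b := by
      rw [varIdealLe]
      exact Ideal.subset_span ⟨a, le_of_lt hab, rfl⟩
    have hXam : (X a : MvPolynomial (Fin n) k) ^ m ∈ (varIdealLe k b) ^ m := by
      exact Ideal.pow_mem_pow hXa m
    have hkey := Submodule.mem_colon.mp hm _ hXam
    rw [smul_eq_mul, X_pow_eq_monomial, monomial_mul, mul_one] at hkey
    refine ⟨m, ?_⟩
    have heq : d + Finsupp.single a m - Finsupp.single b 1
        = (d - Finsupp.single b 1) + Finsupp.single a m := by
      ext t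
      simp only [Finsupp.add_apply, Finsupp.tsub_apply]
      rcases eq_or_ne t b with rfl | htb
      · simp only [Finsupp.single_eq_same, Finsupp.single_eq_of_ne hab']
        omega
      · simp only [Finsupp.single_eq_of_ne htb]
        omega
    rwa [heq]
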